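/- For every γ ≥ 0, every integer n ≥ 1 and all integers x ≥ 0, y ≥ 1, the weighted half-space transition kernel has the explicit formula p_γ(n,x,y) = T(n, y−x) − T(n, y+x) + 2γ · ∑_{j=0}^{n−1} γ^j · ((y+x+j)/(n−j)) · T(n−j, y+x+j). -/

import Mathlib

open MeasureTheory Real

/-- A reflecting path of length `n` on `ℤ_{≥0}`: nearest-neighbour steps away from `0`,
and a forced step `0 → 1` from the origin. -/
def IsReflPath (n : ℕ) (S : Fin (n + 1) → ℕ) : Prop :=
  ∀ i : Fin n,
    (1 ≤ S i.castSucc → (S i.succ = S i.castSucc + 1 ∨ S i.succ + 1 = S i.castSucc)) ∧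
    (S i.castSucc = 0 → S i.succ = 1)

/-- The step weight `w(S) = ∏_{i=0}^{n-1} q(S_i)` with `q(0) = 1`, `q(z) = 1/2` for `z ≥ 1`. -/
noncomputable def pathWeight (n : ℕ) (S : Fin (n + 1) → ℕ) : ℝ :=
  ∏ i : Fin n, if S i.castSucc = 0 then (1 : ℝ) else (1 / 2 : ℝ)

/-- The number of visits to the origin `#{0 ≤ i ≤ n : S_i = 0}`. -/
def numZeros (n : ℕ) (S : Fin (n + 1) → ℕ) : ℕ :=
  (Finset.univ.filter (fun i : Fin (n + 1) => S i = 0)).card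

/-- The reflecting paths of length `n` from `x` to `y`. -/
def ReflPaths (n x y : ℕ) : Set (Fin (n + 1) → ℕ) :=
  {S | S 0 = x ∧ S (Fin.last n) = y ∧ IsReflPath n S}

/-- The weighted half-space transition kernel
`p_γ(n,x,y) = ∑_S γ^{#{0 ≤ i ≤ n : S_i = 0}} w(S)`, summing over reflecting paths of
length `n` from `x` to `y`. -/
noncomputable def pGamma (γ : ℝ) (n x y : ℕ) : ℝ :=
  ∑' S : ReflPaths n x y, γ ^ numZeros n S.1 * pathWeight n S.1

/-- `T(n,z) = 2^{-n} binom(n, (n+z)/2)` when `|z| ≤ n` and `z ≡ n (mod 2)`, else `0`. -/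
noncomputable def Tprob (n : ℕ) (z : ℤ) : ℝ :=
  if |z| ≤ (n : ℤ) ∧ ((n : ℤ) + z) % 2 = 0 then
    (2 : ℝ)⁻¹ ^ n * (n.choose (((n : ℤ) + z).toNat / 2) : ℝ)
  else 0

namespace PGaux

lemma Tprob_def' (n : ℕ) (z : ℤ) : Tprob n z =
    if -(n:ℤ) ≤ z ∧ z ≤ (n:ℤ) ∧ ((n : ℤ) + z) % 2 = 0 then
      (2 : ℝ)⁻¹ ^ n * (n.choose (((n : ℤ) + z).toNat / 2) : ℝ)
    else 0 := by
  unfold Tprob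
  simp only [abs_le, and_assoc]

lemma Tprob_zero (z : ℤ) : Tprob 0 z = if z = 0 then 1 else 0 := by
  rw [Tprob_def']
  rcases eq_or_ne z 0 with h | h
  · subst h; norm_num
  · rw [if_neg h, if_neg (by push_cast; omega)]

lemma Tprob_even (n : ℕ) (z : ℤ) : Tprob n (-z) = Tprob n z := by
  rw [Tprob_def', Tprob_def']
  by_cases h : -(n:ℤ) ≤ z ∧ z ≤ (n:ℤ) ∧ ((n : ℤ) + z) % 2 = 0
  · rw [if_pos h, if_pos (by refine ⟨by omega, by omega, by omega⟩)]
    congr 2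
    have h2 : ((n:ℤ) + z).toNat / 2 ≤ n := by omega
    rw [show ((n:ℤ) + -z).toNat / 2 = n - ((n:ℤ) + z).toNat / 2 by omega]
    exact Nat.choose_symm h2
  · rw [if_neg h, if_neg (by intro ⟨h1, h2, h3⟩; exact h ⟨by omega, by omega, by omega⟩)]

lemma Tprob_pascal (n : ℕ) (z : ℤ) :
    Tprob (n + 1) z = 2⁻¹ * Tprob n (z - 1) + 2⁻¹ * Tprob n (z + 1) := by
  rw [Tprob_def', Tprob_def', Tprob_def']
  push_cast
  by_cases h : -((n:ℤ)+1) ≤ z ∧ z ≤ (n:ℤ)+1 ∧ ((n : ℤ) + 1 + z) % 2 = 0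
  · rw [if_pos (by push_cast; exact ⟨h.1, h.2.1, h.2.2⟩)]
    rcases eq_or_ne z (-(n:ℤ) - 1) with hz | hz
    · subst hz
      rw [if_neg (by omega), if_pos (by refine ⟨by omega, by omega, by omega⟩)]
      rw [show ((n:ℤ) + 1 + (-(n:ℤ) - 1)).toNat / 2 = 0 by omega,
        show ((n:ℤ) + (-(n:ℤ) - 1 + 1)).toNat / 2 = 0 by omega]
      simp [pow_succ]; ring
    · rcases eq_or_ne z ((n:ℤ) + 1) with hz2 | hz2
      · subst hz2
        rw [if_pos (by refine ⟨by omega, by omega, by omega⟩), if_neg (by omega)]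
        rw [show ((n:ℤ) + 1 + ((n:ℤ) + 1)).toNat / 2 = n + 1 by omega,
          show ((n:ℤ) + ((n:ℤ) + 1 - 1)).toNat / 2 = n by omega]
        simp [pow_succ]; ring
      · rw [if_pos (by refine ⟨by omega, by omega, by omega⟩),
          if_pos (by refine ⟨by omega, by omega, by omega⟩)]
        obtain ⟨k, e1, e2, e3⟩ : ∃ k : ℕ, ((n:ℤ) + 1 + z).toNat / 2 = k + 1 ∧
            ((n:ℤ) + (z - 1)).toNat / 2 = k ∧ ((n:ℤ) + (z + 1)).toNat / 2 = k + 1 :=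
          ⟨((n:ℤ) + (z-1)).toNat / 2, by omega, rfl, by omega⟩
        rw [e1, e2, e3, Nat.choose_succ_succ]
        push_cast
        rw [pow_succ]
        ring
  · rw [if_neg (by push_cast; omega), if_neg (by omega), if_neg (by omega)]
    ring

end PGaux

namespace PGaux

/-- first passage weight: `f m z = (z/m) T(m,z)` for `m ≥ 1`, `f 0 z = [z=0]`. -/
noncomputable def fpp : ℕ → ℤ → ℝ
  | 0, z => if z = 0 then 1 else 0
  | (m+1), z => (z : ℝ) / ((m : ℝ) + 1) * Tprob (m+1) z

lemma fpp_neg (m : ℕ) (z : ℤ) : fpp (m+1) (-z) = - fpp (m+1) z := by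
  show (↑(-z) : ℝ) / _ * Tprob (m+1) (-z) = -((z:ℝ) / _ * Tprob (m+1) z)
  rw [Tprob_even]
  push_cast
  ring

lemma choose_eq_zero_of_big {m k : ℕ} (h : m < k) : m.choose k = 0 :=
  Nat.choose_eq_zero_of_lt h

lemma fT (m : ℕ) (z : ℤ) (hz : 0 ≤ z) :
    fpp (m+1) z = 2⁻¹ * (Tprob m (z-1) - Tprob m (z+1)) := by
  show (z : ℝ) / ((m : ℝ) + 1) * Tprob (m+1) z = _
  rw [Tprob_def', Tprob_def', Tprob_def']
  push_cast
  by_cases h : -((m:ℤ)+1) ≤ z ∧ z ≤ (m:ℤ)+1 ∧ ((m : ℤ) + 1 + z) % 2 = 0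
  · rw [if_pos (by push_cast; exact ⟨h.1, h.2.1, h.2.2⟩)]
    set k := ((m:ℤ) + 1 + z).toNat / 2 with hkdef
    have hk1 : 1 ≤ k := by omega
    have hkm : k ≤ m + 1 := by omega
    have hzk : (z : ℝ) = 2 * (k:ℝ) - ((m:ℝ) + 1) := by
      have : z = 2 * (k:ℤ) - ((m:ℤ)+1) := by omega
      rw [this]; push_cast; ring
    have hidx : ((m:ℤ) + (z-1)).toNat / 2 = k - 1 := by omega
    have e1 : (if -(m:ℤ) ≤ z - 1 ∧ z - 1 ≤ (m:ℤ) ∧ ((m:ℤ) + (z-1)) % 2 = 0 then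
        (2:ℝ)⁻¹ ^ m * (m.choose (((m:ℤ) + (z-1)).toNat / 2) : ℝ) else 0)
        = (2:ℝ)⁻¹ ^ m * (m.choose (k-1) : ℝ) := by
      rw [if_pos ⟨by omega, by omega, by omega⟩, hidx]
    have e2 : (if -(m:ℤ) ≤ z + 1 ∧ z + 1 ≤ (m:ℤ) ∧ ((m:ℤ) + (z+1)) % 2 = 0 then
        (2:ℝ)⁻¹ ^ m * (m.choose (((m:ℤ) + (z+1)).toNat / 2) : ℝ) else 0)
        = (2:ℝ)⁻¹ ^ m * (m.choose k : ℝ) := by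
      by_cases h2 : -(m:ℤ) ≤ z + 1 ∧ z + 1 ≤ (m:ℤ) ∧ ((m:ℤ) + (z+1)) % 2 = 0
      · rw [if_pos h2, show ((m:ℤ) + (z+1)).toNat / 2 = k by omega]
      · rw [if_neg h2, choose_eq_zero_of_big (show m < k by omega)]
        simp
    rw [e1, e2]
    have hAn : (m+1) * m.choose (k-1) = (m+1).choose k * k := by
      have h := Nat.add_one_mul_choose_eq m (k-1)
      simpa [Nat.succ_eq_add_one, show k - 1 + 1 = k from by omega] using h
    have hA : ((m:ℝ)+1) * (m.choose (k-1) : ℝ) = ((m+1).choose k : ℝ) * (k:ℝ) := by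
      exact_mod_cast hAn
    have hB : ((m.choose k : ℝ)) * ((m:ℝ) + 1) = ((m+1).choose k : ℝ) * ((m:ℝ) + 1 - (k:ℝ)) := by
      have h' : ((m.choose k * (m+1) : ℕ) : ℝ) = (((m+1).choose k * (m+1-k) : ℕ) : ℝ) := by
        rw [Nat.choose_mul_succ_eq m k]
      push_cast [Nat.cast_sub hkm] at h'
      exact h'
    have key : (z:ℝ) * (((m+1).choose k : ℕ) : ℝ)
        = ((m:ℝ)+1) * (m.choose (k-1) : ℝ) - ((m:ℝ)+1) * (m.choose k : ℝ) := by
      rw [hzk]; linear_combination (-1 : ℝ) * hA + hB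
    have hm1 : ((m:ℝ) + 1) ≠ 0 := by positivity
    rw [pow_succ, div_mul_eq_mul_div, div_eq_iff hm1]
    linear_combination ((2:ℝ)⁻¹ ^ m * 2⁻¹) * key
  · rw [if_neg (by push_cast; omega), if_neg (by omega), if_neg (by omega)]
    ring

lemma fRec (m : ℕ) (z : ℤ) (hz : 0 ≤ z) :
    fpp (m+1) z = 2⁻¹ * fpp m (z - 1) + 2⁻¹ * fpp m (z + 1) := by
  rcases m with _ | m
  · simp only [fpp]
    rw [Tprob_pascal 0 z, Tprob_zero, Tprob_zero]
    rcases eq_or_ne z 0 with h | h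
    · subst h; norm_num
    · rcases eq_or_ne z 1 with h1 | h1
      · subst h1; norm_num
      · rw [if_neg (by omega), if_neg (by omega)]
        push_cast; ring
  · rcases eq_or_ne z 0 with h0 | h0
    · subst h0
      rw [show (0:ℤ) - 1 = -(0+1) from rfl, fpp_neg]
      simp only [fpp]
      push_cast; ring
    · have hz1 : 0 ≤ z - 1 := by omega
      rw [fT _ _ hz, fT _ _ hz1, fT _ _ (by omega : 0 ≤ z + 1),
        Tprob_pascal, Tprob_pascal,
        show z + 1 - 1 = z - 1 + 1 from by ring]
      ring
end PGaux

namespace PGaux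

lemma Tprob_eq_zero (n : ℕ) (z : ℤ) (h : (n:ℤ) < z) : Tprob n z = 0 := by
  rw [Tprob_def', if_neg (by omega)]

lemma fpp_succ (m : ℕ) (z : ℤ) : fpp (m+1) z = (z:ℝ)/((m:ℝ)+1) * Tprob (m+1) z := rfl

lemma fpp_zero (z : ℤ) : fpp 0 z = if z = 0 then 1 else 0 := rfl

/-- recursive description of the weighted kernel -/
noncomputable def Pk (γ : ℝ) : ℕ → ℕ → ℕ → ℝ
  | 0, x, y => if x = y then (if x = 0 then γ else 1) else 0
  | (n+1), x, 0 => γ * (2⁻¹ * Pk γ n x 1)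
  | (n+1), x, 1 => Pk γ n x 0 + 2⁻¹ * Pk γ n x 2
  | (n+1), x, (y+2) => 2⁻¹ * Pk γ n x (y+1) + 2⁻¹ * Pk γ n x (y+3)

noncomputable def Aq (γ : ℝ) (n : ℕ) (s : ℤ) : ℝ :=
  ∑ j ∈ Finset.range n, γ ^ j * fpp (n - j) (s + j)

noncomputable def Fq (γ : ℝ) (n x y : ℕ) : ℝ :=
  Tprob n ((y:ℤ) - x) - Tprob n ((y:ℤ) + x) + 2 * γ * Aq γ n ((x:ℤ) + y)

noncomputable def Gq (γ : ℝ) (n x : ℕ) : ℝ :=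
  γ * ∑ j ∈ Finset.range (n+1), γ ^ j * fpp (n - j) ((x:ℤ) + j)

lemma Aq_rec (γ : ℝ) (n : ℕ) (s : ℤ) (hs : 2 ≤ s) :
    Aq γ (n+1) s = 2⁻¹ * Aq γ n (s-1) + 2⁻¹ * Aq γ n (s+1) := by
  unfold Aq
  rw [Finset.sum_range_succ]
  have hlast : fpp (n + 1 - n) (s + n) = 0 := by
    rw [show n + 1 - n = 0 + 1 from by omega, fpp_succ,
      Tprob_eq_zero (0+1) _ (by push_cast; omega)]
    ring
  rw [hlast, mul_zero, add_zero, Finset.mul_sum, Finset.mul_sum, ← Finset.sum_add_distrib]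
  apply Finset.sum_congr rfl
  intro j hj
  have hj' : j < n := Finset.mem_range.mp hj
  rw [show n + 1 - j = (n - j) + 1 from by omega, fRec (n-j) (s + j) (by omega),
    show s + (j:ℤ) - 1 = s - 1 + j from by ring, show s + (j:ℤ) + 1 = s + 1 + j from by ring]
  ring

lemma Aq_rec1 (γ : ℝ) (n : ℕ) (t : ℤ) (ht : 0 ≤ t) :
    2 * Aq γ (n+1) (t+1) =
      (∑ j ∈ Finset.range (n+1), γ ^ j * fpp (n - j) (t + j)) + Aq γ n (t+2) := by
  unfold Aq
  rw [Finset.mul_sum]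
  have h1 : ∀ j ∈ Finset.range (n+1), 2 * (γ^j * fpp (n+1-j) (t+1+j))
      = γ^j * fpp (n-j) (t+j) + γ^j * fpp (n-j) (t+2+j) := by
    intro j hj
    have hj' : j < n + 1 := Finset.mem_range.mp hj
    rw [show n+1-j = (n-j)+1 from by omega, fRec (n-j) (t+1+j) (by omega),
      show t + 1 + (j:ℤ) - 1 = t + j from by ring,
      show t + 1 + (j:ℤ) + 1 = t + 2 + j from by ring]
    ring
  rw [Finset.sum_congr rfl h1, Finset.sum_add_distrib]
  congr 1
  rw [Finset.sum_range_succ, show n - n = 0 from by omega, fpp_zero,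
    if_neg (by omega : ¬ (t + 2 + (n:ℤ) = 0))]
  ring

lemma Gq_rec (γ : ℝ) (n x : ℕ) : Gq γ (n+1) x = γ * (2⁻¹ * Fq γ n x 1) := by
  unfold Gq Fq
  rw [Finset.sum_range_succ']
  have h0 : γ ^ 0 * fpp (n + 1 - 0) ((x:ℤ) + (0:ℕ)) = fpp (n+1) x := by
    norm_num
  rw [h0, fT n x (by positivity)]
  have h1 : ∀ i ∈ Finset.range (n+1), γ ^ (i+1) * fpp (n + 1 - (i+1)) ((x:ℤ) + (i+1:ℕ))
      = γ * (γ ^ i * fpp (n - i) (((x:ℤ)+1) + i)) := by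
    intro i hi
    rw [show n + 1 - (i+1) = n - i from by omega,
      show (x:ℤ) + ((i+1:ℕ):ℤ) = ((x:ℤ)+1) + i from by push_cast; ring]
    ring
  rw [Finset.sum_congr rfl h1, ← Finset.mul_sum]
  have h2 : ∑ i ∈ Finset.range (n+1), γ ^ i * fpp (n - i) (((x:ℤ)+1) + i)
      = Aq γ n ((x:ℤ) + 1) := by
    unfold Aq
    rw [Finset.sum_range_succ, show n - n = 0 from by omega, fpp_zero,
      if_neg (by omega : ¬ ((x:ℤ) + 1 + (n:ℤ) = 0))]
    ring
  rw [h2]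
  rw [show ((1:ℕ):ℤ) - (x:ℤ) = -((x:ℤ) - 1) from by push_cast; ring, Tprob_even,
    show ((1:ℕ):ℤ) + (x:ℤ) = (x:ℤ) + 1 from by push_cast; ring,
    show (x:ℤ) + ((1:ℕ):ℤ) = (x:ℤ) + 1 from by push_cast; ring]
  ring

end PGaux

namespace PGaux

lemma Pk_eq (γ : ℝ) : ∀ n x y, Pk γ n x y = if y = 0 then Gq γ n x else Fq γ n x y := by
  intro n
  induction n with
  | zero =>
    intro x y
    rcases y with _ | y
    · simp only [Pk, Gq, if_pos rfl]
      rw [Finset.sum_range_one]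
      rcases eq_or_ne x 0 with h | h
      · subst h; norm_num [fpp_zero]
      · rw [fpp_zero, if_neg (by exact_mod_cast h : ¬((x:ℤ) + ((0:ℕ):ℤ) = 0))]
        norm_num [h]
    · simp only [Pk, Fq, if_neg (Nat.succ_ne_zero y)]
      unfold Aq
      rw [Finset.range_zero, Finset.sum_empty, Tprob_zero, Tprob_zero]
      rcases eq_or_ne x (y+1) with h | h
      · subst h
        rw [if_pos rfl, if_neg (by omega), if_pos (by push_cast; ring), if_neg (by push_cast; omega)]
        ring
      · rw [if_neg h, if_neg (by push_cast; omega), if_neg (by push_cast; omega)]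
        ring
  | succ n ih =>
    intro x y
    match y with
    | 0 =>
      show Pk γ (n+1) x 0 = Gq γ (n+1) x
      rw [show Pk γ (n+1) x 0 = γ * (2⁻¹ * Pk γ n x 1) from rfl, ih x 1, Gq_rec]
      norm_num
    | 1 =>
      show Pk γ (n+1) x 1 = Fq γ (n+1) x 1
      rw [show Pk γ (n+1) x 1 = Pk γ n x 0 + 2⁻¹ * Pk γ n x 2 from rfl,
        ih x 0, ih x 2]
      rw [if_pos rfl, if_neg (by norm_num : ¬((2:ℕ) = 0))]
      unfold Fq
      -- Pascal on the two T terms of Fq γ (n+1) x 1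
      rw [show ((1:ℕ):ℤ) - (x:ℤ) = (1 - (x:ℤ)) from by push_cast; ring,
        show ((1:ℕ):ℤ) + (x:ℤ) = (1 + (x:ℤ)) from by push_cast; ring,
        Tprob_pascal n (1 - (x:ℤ)), Tprob_pascal n (1 + (x:ℤ))]
      rw [show (1:ℤ) - (x:ℤ) - 1 = -(x:ℤ) from by ring, Tprob_even,
        show (1:ℤ) - (x:ℤ) + 1 = -((x:ℤ) - 2) from by ring, Tprob_even,
        show (1:ℤ) + (x:ℤ) - 1 = (x:ℤ) from by ring,
        show (1:ℤ) + (x:ℤ) + 1 = (x:ℤ) + 2 from by ring]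
      -- Aq part
      have hA := Aq_rec1 γ n (x:ℤ) (by positivity)
      have hGq : Gq γ n x = γ * ∑ j ∈ Finset.range (n+1), γ ^ j * fpp (n - j) ((x:ℤ) + j) := rfl
      rw [show (x:ℤ) + ((1:ℕ):ℤ) = (x:ℤ) + 1 from by push_cast; ring]
      rw [show ((2:ℕ):ℤ) - (x:ℤ) = -((x:ℤ) - 2) from by push_cast; ring, Tprob_even,
        show ((2:ℕ):ℤ) + (x:ℤ) = (x:ℤ) + 2 from by push_cast; ring,
        show (x:ℤ) + ((2:ℕ):ℤ) = (x:ℤ) + 2 from by push_cast; ring] at *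
      rw [hGq]
      linear_combination -γ * hA
    | (w+2) =>
      show Pk γ (n+1) x (w+2) = Fq γ (n+1) x (w+2)
      rw [show Pk γ (n+1) x (w+2) = 2⁻¹ * Pk γ n x (w+1) + 2⁻¹ * Pk γ n x (w+3) from rfl,
        ih x (w+1), ih x (w+3)]
      simp only [if_neg (Nat.succ_ne_zero w), if_neg (by omega : w + 3 ≠ 0),
        if_neg (by omega : w + 2 ≠ 0)]
      unfold Fq
      rw [show ((w+2:ℕ):ℤ) - (x:ℤ) = ((w:ℤ) + 2 - x) from by push_cast; ring,
        show ((w+2:ℕ):ℤ) + (x:ℤ) = ((w:ℤ) + 2 + x) from by push_cast; ring,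
        Tprob_pascal n ((w:ℤ) + 2 - x), Tprob_pascal n ((w:ℤ) + 2 + x),
        show (x:ℤ) + ((w+2:ℕ):ℤ) = ((x:ℤ) + w + 1) + 1 from by push_cast; ring,
        Aq_rec γ n _ (by omega)]
      rw [show ((w+1:ℕ):ℤ) - (x:ℤ) = ((w:ℤ) + 2 - x) - 1 from by push_cast; ring,
        show ((w+1:ℕ):ℤ) + (x:ℤ) = ((w:ℤ) + 2 + x) - 1 from by push_cast; ring,
        show ((w+3:ℕ):ℤ) - (x:ℤ) = ((w:ℤ) + 2 - x) + 1 from by push_cast; ring,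
        show ((w+3:ℕ):ℤ) + (x:ℤ) = ((w:ℤ) + 2 + x) + 1 from by push_cast; ring,
        show (x:ℤ) + ((w+1:ℕ):ℤ) = ((x:ℤ) + w + 1) + 1 - 1 from by push_cast; ring,
        show (x:ℤ) + ((w+3:ℕ):ℤ) = ((x:ℤ) + w + 1) + 1 + 1 from by push_cast; ring]
      ring

end PGaux

namespace PGaux

lemma reflPath_bound {n x y : ℕ} {S : Fin (n+1) → ℕ} (hS : S ∈ ReflPaths n x y) :
    ∀ i : Fin (n+1), S i ≤ x + n := by
  have key : ∀ i : Fin (n+1), S i ≤ x + i.1 := by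
    intro i
    induction i using Fin.induction with
    | zero => simp [hS.1]
    | succ j ihj =>
      obtain ⟨h1, h2⟩ := hS.2.2 j
      have hcast : ((j.castSucc : Fin (n+1)) : ℕ) = (j : ℕ) := rfl
      rcases Nat.eq_zero_or_pos (S j.castSucc) with h0 | h0
      · have := h2 h0
        simp only [Fin.val_succ, hcast] at *
        omega
      · rcases h1 h0 with h | h <;> (simp only [Fin.val_succ, hcast] at *; omega)
  intro i
  exact le_trans (key i) (by have := i.2; omega)

lemma reflPaths_finite (n x y : ℕ) : (ReflPaths n x y).Finite := by
  apply Set.Finite.subset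
    (Set.Finite.pi (fun i : Fin (n+1) => Set.finite_Iic (x + n)))
  intro S hS
  rw [Set.mem_pi]
  intro i _
  exact reflPath_bound hS i

noncomputable def pathFinset (n x y : ℕ) : Finset (Fin (n+1) → ℕ) :=
  (reflPaths_finite n x y).toFinset

lemma mem_pathFinset {n x y : ℕ} {S : Fin (n+1) → ℕ} :
    S ∈ pathFinset n x y ↔ S ∈ ReflPaths n x y := Set.Finite.mem_toFinset _

lemma pGamma_eq_sum (γ : ℝ) (n x y : ℕ) :
    pGamma γ n x y = ∑ S ∈ pathFinset n x y, γ ^ numZeros n S * pathWeight n S := by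
  have h := tsum_subtype (ReflPaths n x y)
    (fun T : Fin (n+1) → ℕ => γ ^ numZeros n T * pathWeight n T)
  unfold pGamma
  erw [h]
  rw [tsum_eq_sum (s := pathFinset n x y)
    (fun S hS => Set.indicator_of_notMem (fun h => hS (mem_pathFinset.mpr h)) _)]
  exact Finset.sum_congr rfl
    (fun S hS => Set.indicator_of_mem (mem_pathFinset.mp hS) _)

lemma init_mem {n x y : ℕ} {S : Fin (n+2) → ℕ} (hS : S ∈ ReflPaths (n+1) x y) :
    Fin.init S ∈ ReflPaths n x (S (Fin.castSucc (Fin.last n))) := by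
  refine ⟨?_, rfl, ?_⟩
  · show S (Fin.castSucc 0) = x
    rw [Fin.castSucc_zero]; exact hS.1
  · intro j
    have h := hS.2.2 j.castSucc
    unfold Fin.init
    rwa [Fin.succ_castSucc] at h

lemma snoc_mem {n x y' y : ℕ} {S' : Fin (n+1) → ℕ} (hS' : S' ∈ ReflPaths n x y')
    (h1 : 1 ≤ y' → (y = y' + 1 ∨ y + 1 = y')) (h2 : y' = 0 → y = 1) :
    Fin.snoc S' y ∈ ReflPaths (n+1) x y := by
  refine ⟨?_, ?_, ?_⟩
  · have h0 : (Fin.snoc S' y : Fin (n+2) → ℕ) ((0 : Fin (n+1)).castSucc) = S' 0 := by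
      rw [Fin.snoc_castSucc]
    rw [Fin.castSucc_zero] at h0
    show (Fin.snoc S' y : Fin (n+2) → ℕ) 0 = x
    rw [h0]; exact hS'.1
  · rw [Fin.snoc_last]
  · intro i
    induction i using Fin.lastCases with
    | last =>
      rw [Fin.succ_last, Fin.snoc_last, Fin.snoc_castSucc]
      rw [hS'.2.1]
      exact ⟨h1, h2⟩
    | cast j =>
      rw [Fin.succ_castSucc, Fin.snoc_castSucc, Fin.snoc_castSucc]
      exact hS'.2.2 j

end PGaux

namespace PGaux

lemma snoc_weight (n : ℕ) (S' : Fin (n+1) → ℕ) (y : ℕ) :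
    pathWeight (n+1) (Fin.snoc S' y) =
      pathWeight n S' * (if S' (Fin.last n) = 0 then (1:ℝ) else (1/2 : ℝ)) := by
  unfold pathWeight
  rw [Fin.prod_univ_castSucc
    (f := fun i : Fin (n+1) => if (Fin.snoc S' y : Fin (n+2) → ℕ) i.castSucc = 0 then (1:ℝ) else (1/2:ℝ))]
  congr 1
  · apply Finset.prod_congr rfl
    intro j _
    rw [Fin.snoc_castSucc]
  · rw [Fin.snoc_castSucc]

lemma numZeros_sum (n : ℕ) (S : Fin (n+1) → ℕ) :
    numZeros n S = ∑ i : Fin (n+1), (if S i = 0 then 1 else 0) := by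
  unfold numZeros
  rw [Finset.card_filter]

lemma snoc_numZeros (n : ℕ) (S' : Fin (n+1) → ℕ) (y : ℕ) :
    numZeros (n+1) (Fin.snoc S' y) = numZeros n S' + (if y = 0 then 1 else 0) := by
  rw [numZeros_sum, numZeros_sum]
  rw [Fin.sum_univ_castSucc
    (f := fun i : Fin (n+2) => if (Fin.snoc S' y : Fin (n+2) → ℕ) i = 0 then 1 else 0)]
  congr 1
  · apply Finset.sum_congr rfl
    intro j _
    rw [Fin.snoc_castSucc]
  · rw [Fin.snoc_last]

lemma sum_filter_pred (γ : ℝ) (n x y y' : ℕ)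
    (h1 : 1 ≤ y' → (y = y' + 1 ∨ y + 1 = y')) (h2 : y' = 0 → y = 1) :
    ∑ S ∈ (pathFinset (n+1) x y).filter (fun S => S (Fin.castSucc (Fin.last n)) = y'),
      γ ^ numZeros (n+1) S * pathWeight (n+1) S
    = (if y' = 0 then (1:ℝ) else (1/2:ℝ)) * (if y = 0 then γ else 1) *
      ∑ S' ∈ pathFinset n x y', γ ^ numZeros n S' * pathWeight n S' := by
  rw [Finset.mul_sum]
  apply Finset.sum_nbij' (i := fun S => Fin.init S) (j := fun S' => Fin.snoc S' y)
  · intro S hS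
    rw [Finset.mem_filter] at hS
    obtain ⟨hS1, hS2⟩ := hS
    rw [mem_pathFinset] at hS1 ⊢
    have := init_mem hS1
    rwa [hS2] at this
  · intro S' hS'
    rw [mem_pathFinset] at hS'
    rw [Finset.mem_filter, mem_pathFinset]
    refine ⟨snoc_mem hS' h1 h2, ?_⟩
    rw [Fin.snoc_castSucc, hS'.2.1]
  · intro S hS
    rw [Finset.mem_filter, mem_pathFinset] at hS
    have hlast : S (Fin.last (n+1)) = y := hS.1.2.1
    rw [← hlast]
    exact Fin.snoc_init_self S
  · intro S' _
    show Fin.init (Fin.snoc S' y : Fin (n+2) → ℕ) = S'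
    rw [Fin.init_snoc]
  · intro S hS
    rw [Finset.mem_filter, mem_pathFinset] at hS
    have hlast : S (Fin.last (n+1)) = y := hS.1.2.1
    have hrepr : S = Fin.snoc (Fin.init S) y := by rw [← hlast]; exact (Fin.snoc_init_self S).symm
    have hw := snoc_weight n (Fin.init S) y
    have hz := snoc_numZeros n (Fin.init S) y
    rw [← hrepr] at hw hz
    have hinitlast : Fin.init S (Fin.last n) = y' := hS.2
    rw [hw, hz, hinitlast, pow_add]
    split_ifs <;> ring

end PGaux

namespace PGaux

lemma pred_cases {n x y : ℕ} {S : Fin (n+2) → ℕ} (hS : S ∈ ReflPaths (n+1) x y) :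
    (S ((Fin.last n).castSucc) = 0 ∧ y = 1) ∨
      (y = S ((Fin.last n).castSucc) + 1 ∨ y + 1 = S ((Fin.last n).castSucc)) := by
  have h := hS.2.2 (Fin.last n)
  rw [Fin.succ_last, hS.2.1] at h
  rcases Nat.eq_zero_or_pos (S ((Fin.last n).castSucc)) with h0 | h0
  · exact Or.inl ⟨h0, h.2 h0⟩
  · exact Or.inr (h.1 h0)

lemma pg_rec0 (γ : ℝ) (n x : ℕ) :
    pGamma γ (n+1) x 0 = γ * (2⁻¹ * pGamma γ n x 1) := by
  rw [pGamma_eq_sum, pGamma_eq_sum]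
  have hall : ∀ S ∈ pathFinset (n+1) x 0, S ((Fin.last n).castSucc) = 1 := by
    intro S hS
    rcases pred_cases (mem_pathFinset.mp hS) with ⟨_, h⟩ | h | h <;> omega
  rw [show pathFinset (n+1) x 0
      = (pathFinset (n+1) x 0).filter (fun S => S ((Fin.last n).castSucc) = 1) from
      (Finset.filter_eq_self.mpr hall).symm,
    sum_filter_pred γ n x 0 1 (fun _ => Or.inr rfl) (fun h => by omega)]
  norm_num
  ring

lemma pg_rec1 (γ : ℝ) (n x : ℕ) :
    pGamma γ (n+1) x 1 = pGamma γ n x 0 + 2⁻¹ * pGamma γ n x 2 := by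
  rw [pGamma_eq_sum, pGamma_eq_sum, pGamma_eq_sum]
  rw [← Finset.sum_filter_add_sum_filter_not (pathFinset (n+1) x 1)
    (fun S => S ((Fin.last n).castSucc) = 0)]
  congr 1
  · rw [sum_filter_pred γ n x 1 0 (fun h => by omega) (fun _ => rfl)]
    norm_num
  · have hiff : ∀ S ∈ pathFinset (n+1) x 1,
        (¬ S ((Fin.last n).castSucc) = 0) ↔ S ((Fin.last n).castSucc) = 2 := by
      intro S hS
      rcases pred_cases (mem_pathFinset.mp hS) with ⟨h, _⟩ | h | h <;> omega
    rw [Finset.filter_congr hiff,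
      sum_filter_pred γ n x 1 2 (fun _ => Or.inr rfl) (fun h => by omega)]
    norm_num

lemma pg_rec2 (γ : ℝ) (n x w : ℕ) :
    pGamma γ (n+1) x (w+2) = 2⁻¹ * pGamma γ n x (w+1) + 2⁻¹ * pGamma γ n x (w+3) := by
  rw [pGamma_eq_sum, pGamma_eq_sum, pGamma_eq_sum]
  rw [← Finset.sum_filter_add_sum_filter_not (pathFinset (n+1) x (w+2))
    (fun S => S ((Fin.last n).castSucc) = w+1)]
  congr 1
  · rw [sum_filter_pred γ n x (w+2) (w+1) (fun _ => Or.inl rfl) (fun h => by omega)]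
    norm_num
  · have hiff : ∀ S ∈ pathFinset (n+1) x (w+2),
        (¬ S ((Fin.last n).castSucc) = w+1) ↔ S ((Fin.last n).castSucc) = w+3 := by
      intro S hS
      rcases pred_cases (mem_pathFinset.mp hS) with ⟨h, hy⟩ | h | h <;> omega
    rw [Finset.filter_congr hiff,
      sum_filter_pred γ n x (w+2) (w+3) (fun _ => Or.inr rfl) (fun h => by omega)]
    norm_num

lemma pGamma_zero (γ : ℝ) (x y : ℕ) :
    pGamma γ 0 x y = if x = y then (if x = 0 then γ else 1) else 0 := by
  rcases eq_or_ne x y with h | h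
  · subst h
    have hset : ReflPaths 0 x x = {fun _ => x} := by
      ext S
      constructor
      · intro ⟨hS0, _, _⟩
        rw [Set.mem_singleton_iff]
        funext i
        have hi : i = 0 := Fin.ext (by omega)
        rw [hi, hS0]
      · intro hSmem
        rw [Set.mem_singleton_iff] at hSmem
        subst hSmem
        exact ⟨rfl, rfl, fun i => i.elim0⟩
    unfold pGamma
    rw [hset]
    have hts := tsum_singleton (α := ℝ) (fun _ => x : Fin 1 → ℕ)
      (fun T : Fin 1 → ℕ => γ ^ numZeros 0 T * pathWeight 0 T)
    erw [hts]
    have hw : pathWeight 0 (fun _ => x) = 1 := by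
      unfold pathWeight
      simp
    have hz : numZeros 0 (fun _ => x) = if x = 0 then 1 else 0 := by
      unfold numZeros
      rcases eq_or_ne x 0 with h0 | h0 <;> simp [h0]
    rw [hw, hz, if_pos rfl]
    rcases eq_or_ne x 0 with h0 | h0 <;> simp [h0]
  · have hset : ReflPaths 0 x y = ∅ := by
      ext S
      simp only [Set.mem_empty_iff_false, iff_false]
      intro ⟨hS0, hSl, _⟩
      exact h (by rw [← hS0, ← hSl]; rfl)
    unfold pGamma
    rw [hset, tsum_empty, if_neg h]

end PGaux


namespace PGaux

lemma pGamma_eq_Pk (γ : ℝ) : ∀ n x y, pGamma γ n x y = Pk γ n x y := by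
  intro n
  induction n with
  | zero =>
    intro x y
    rw [pGamma_zero]
    rfl
  | succ n ih =>
    intro x y
    match y with
    | 0 => rw [pg_rec0, ih]; rfl
    | 1 => rw [pg_rec1, ih, ih]; rfl
    | (w+2) => rw [pg_rec2, ih, ih]; rfl

end PGaux

/-- Explicit formula for the weighted half-space transition kernel:
`p_γ(n,x,y) = T(n,y-x) - T(n,y+x) + 2γ ∑_{j=0}^{n-1} γ^j ((y+x+j)/(n-j)) T(n-j, y+x+j)`. -/
theorem pGamma_formula (γ : ℝ) (hγ : 0 ≤ γ) (n : ℕ) (hn : 1 ≤ n) (x y : ℕ) (hy : 1 ≤ y) :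
    pGamma γ n x y =
      Tprob n ((y : ℤ) - (x : ℤ)) - Tprob n ((y : ℤ) + (x : ℤ)) +
        2 * γ * ∑ j ∈ Finset.range n,
          γ ^ j * (((y : ℝ) + (x : ℝ) + (j : ℝ)) / ((n : ℝ) - (j : ℝ))) *
            Tprob (n - j) ((y : ℤ) + (x : ℤ) + (j : ℤ)) := by
  rw [PGaux.pGamma_eq_Pk, PGaux.Pk_eq, if_neg (by omega : ¬ y = 0)]
  unfold PGaux.Fq
  congr 1
  rw [mul_assoc, mul_assoc]
  congr 1
  congr 1
  unfold PGaux.Aq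
  apply Finset.sum_congr rfl
  intro j hj
  have hj' : j < n := Finset.mem_range.mp hj
  obtain ⟨m, hm⟩ : ∃ m, n - j = m + 1 := ⟨n - j - 1, by omega⟩
  rw [show (x:ℤ) + (y:ℤ) + (j:ℤ) = (y:ℤ) + (x:ℤ) + (j:ℤ) from by ring,
    hm, PGaux.fpp_succ, ← hm]
  have hc1 : (m:ℝ) + 1 = (n:ℝ) - (j:ℝ) := by
    have h1 : ((m + 1 : ℕ) : ℝ) = ((n - j : ℕ) : ℝ) := by rw [← hm]
    rw [Nat.cast_sub hj'.le] at h1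
    push_cast at h1
    linarith
  rw [hc1]
  push_cast
  ring
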